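/- Let K be a field of characteristic 0, α ∈ K, and (A_n)_{n≥0} a sequence in M_l(K) with A_0 = I. If for all n ≥ 0 the identity Σ_{i,j≥0} A_{n+i} A_j (-1)^i (1-αX)^{-n-i} X^i/i! X^j/j! = A_n holds in M_l(K[[X]]), then A_{n+1} = A_n·(nα·I + A_1) for all n ≥ 0, hence A_{n+1} = ∏_{i=0}^{n}(iα·I + A_1). -/

import Mathlib

open PowerSeries Finset

variable {K : Type*} [Field K] [CharZero K] {l : ℕ}

/-- `ascProdFrom B α n = ∏_{i=0}^{n-1} (i·α·I + B)` (product of the factors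
`iα·I + B` for `0 ≤ i ≤ n-1`, in increasing order). -/
def ascProdFrom (B : Matrix (Fin l) (Fin l) K) (α : K) : ℕ → Matrix (Fin l) (Fin l) K
  | 0 => 1
  | n + 1 => ascProdFrom B α n * (((n : K) * α) • (1 : Matrix (Fin l) (Fin l) K) + B)

/-- if `A_0 = I` and the family `(A_n)` satisfies, for every `n ≥ 0`,
the identity `Σ_{i,j≥0} A_{n+i} A_j (-1)^i (1-αX)^{-n-i} X^i/i! X^j/j! = A_n`
in `M_l(K[[X]])` (written coefficientwise), then `A_{n+1} = A_n·(nα·I + A_1)`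
for all `n`, hence `A_{n+1} = ∏_{i=0}^{n}(iα·I + A_1)`. -/
theorem statement3 (α : K) (A : ℕ → Matrix (Fin l) (Fin l) K)
    (hA0 : A 0 = 1)
    (hcocycle : ∀ n : ℕ,
      (PowerSeries.mk fun N =>
        ∑ i ∈ Finset.range (N + 1), ∑ j ∈ Finset.range (N + 1 - i),
          (((-1 : K) ^ i * (((n + i) + (N - i - j) - 1).choose (N - i - j) : K)
              * α ^ (N - i - j)
              * ((Nat.factorial i : K) * (Nat.factorial j : K))⁻¹) •
            (A (n + i) * A j)))
        = PowerSeries.C (A n)) :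
    (∀ n : ℕ, A (n + 1) = A n * (((n : K) * α) • (1 : Matrix (Fin l) (Fin l) K) + A 1)) ∧
    (∀ n : ℕ, A (n + 1) = ascProdFrom (A 1) α (n + 1)) := by
  have key : ∀ n : ℕ, A (n + 1) = A n * (((n : K) * α) • (1 : Matrix (Fin l) (Fin l) K) + A 1) := by
    intro n
    have h := congrArg (PowerSeries.coeff 1) (hcocycle n)
    rw [PowerSeries.coeff_mk, PowerSeries.coeff_C] at h
    simp only [if_neg one_ne_zero, show (1:ℕ)+1 = 2 from rfl, Finset.sum_range_succ,
      Finset.sum_range_zero, Finset.sum_range_one] at h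
    norm_num at h
    rw [hA0, Matrix.mul_one, Matrix.mul_one, add_neg_eq_zero] at h
    rw [← h, Matrix.mul_add, Matrix.mul_smul, Matrix.mul_one]
  refine ⟨key, ?_⟩
  intro n
  induction n with
  | zero =>
    conv_lhs => rw [key 0, hA0]
    rfl
  | succ k ih => rw [key (k + 1), ih]; rfl
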